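/- Fix z ∈ ℂ and τ₀ ∈ ℂ with τ₀ ≠ 0. The multiplicity of τ₀ as a root of the degree-2m polynomial τ ↦ D(z,τ) equals the multiplicity of τ₀⁻¹ as a root of the same polynomial. If moreover z ∈ ℝ, then the multiplicity of the complex conjugate of τ₀ as a root of τ ↦ D(z,τ) also equals the multiplicity of τ₀. -/

import Mathlib

open Matrix Polynomial

/-- Fundamental matrix-valued solutions of the Jacobi recursion
`y_{n+1} = a_n⁻¹ ((z I - b_n) y_n - a_{n-1}ᵀ y_{n-1})`. -/
noncomputable def matSol {m : ℕ} (a b : ℤ → Matrix (Fin m) (Fin m) ℝ) (z : ℂ)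
    (y0 y1 : Matrix (Fin m) (Fin m) ℂ) : ℕ → Matrix (Fin m) (Fin m) ℂ
  | 0 => y0
  | 1 => y1
  | n + 2 =>
      (((a ((n : ℤ) + 1))⁻¹).map Complex.ofReal) *
        ((z • (1 : Matrix (Fin m) (Fin m) ℂ) - (b ((n : ℤ) + 1)).map Complex.ofReal) *
            matSol a b z y0 y1 (n + 1) -
          ((a (n : ℤ)).map Complex.ofReal)ᵀ * matSol a b z y0 y1 n)

/-- The monodromy matrix `ℳ_p(z) = [[θ_p, φ_p], [θ_{p+1}, φ_{p+1}]]`. -/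
noncomputable def monodromy {m : ℕ} (a b : ℤ → Matrix (Fin m) (Fin m) ℝ) (p : ℕ) (z : ℂ) :
    Matrix (Fin m ⊕ Fin m) (Fin m ⊕ Fin m) ℂ :=
  Matrix.fromBlocks (matSol a b z 1 0 p) (matSol a b z 0 1 p)
    (matSol a b z 1 0 (p + 1)) (matSol a b z 0 1 (p + 1))

/-- The degree-`2m` polynomial `τ ↦ D(z,τ) = det(ℳ_p(z) - τ I_{2m})`. -/
noncomputable def DpolyTau {m : ℕ} (a b : ℤ → Matrix (Fin m) (Fin m) ℝ) (p : ℕ) (z : ℂ) :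
    Polynomial ℂ :=
  ((monodromy a b p z).map Polynomial.C -
      (Polynomial.X : Polynomial ℂ) • (1 : Matrix (Fin m ⊕ Fin m) (Fin m ⊕ Fin m) (Polynomial ℂ))).det

section
variable {m : ℕ} (a b : ℤ → Matrix (Fin m) (Fin m) ℝ) (z : ℂ)

/-- complexification of `a n`. -/
noncomputable def Ac (a : ℤ → Matrix (Fin m) (Fin m) ℝ) (n : ℤ) : Matrix (Fin m) (Fin m) ℂ :=
  (a n).map Complex.ofReal

lemma Ac_mul_inv (ha_inv : ∀ n : ℤ, IsUnit (a n).det) (n : ℤ) :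
    Ac a n * ((a n)⁻¹).map Complex.ofReal = 1 := by
  have : Ac a n * ((a n)⁻¹).map Complex.ofReal = ((a n * (a n)⁻¹).map Complex.ofRealHom) := by
    rw [Matrix.map_mul]; rfl
  rw [this, Matrix.mul_nonsing_inv _ (ha_inv n), Matrix.map_one _ (map_zero _) (map_one _)]

lemma matSol_rec (ha_inv : ∀ n : ℤ, IsUnit (a n).det) (y0 y1 : Matrix (Fin m) (Fin m) ℂ) (n : ℕ) :
    Ac a ((n : ℤ) + 1) * matSol a b z y0 y1 (n + 2) =
      (z • (1 : Matrix (Fin m) (Fin m) ℂ) - (b ((n : ℤ) + 1)).map Complex.ofReal) *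
          matSol a b z y0 y1 (n + 1) - (Ac a (n : ℤ))ᵀ * matSol a b z y0 y1 n := by
  show Ac a ((n : ℤ) + 1) * ((((a ((n : ℤ) + 1))⁻¹).map Complex.ofReal) * _) = _
  rw [← mul_assoc, Ac_mul_inv a ha_inv, one_mul]
  rfl

lemma wronskian_const (ha_inv : ∀ n : ℤ, IsUnit (a n).det) (hb_sym : ∀ n : ℤ, (b n)ᵀ = b n)
    (y0 y1 w0 w1 : Matrix (Fin m) (Fin m) ℂ) (n : ℕ) :
    (matSol a b z y0 y1 n)ᵀ * (Ac a (n : ℤ) * matSol a b z w0 w1 (n + 1)) -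
      (matSol a b z y0 y1 (n + 1))ᵀ * ((Ac a (n : ℤ))ᵀ * matSol a b z w0 w1 n) =
    y0ᵀ * (Ac a 0 * w1) - y1ᵀ * ((Ac a 0)ᵀ * w0) := by
  induction n with
  | zero => norm_num [matSol]
  | succ n ih =>
    rw [← ih]
    set u := matSol a b z y0 y1
    set v := matSol a b z w0 w1
    have hcast : ((n + 1 : ℕ) : ℤ) = (n : ℤ) + 1 := by push_cast; ring
    have hv := matSol_rec a b z ha_inv w0 w1 n
    have hu := matSol_rec a b z ha_inv y0 y1 n
    have hsym : (z • (1 : Matrix (Fin m) (Fin m) ℂ) - (b ((n : ℤ) + 1)).map Complex.ofReal)ᵀ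
        = z • (1 : Matrix (Fin m) (Fin m) ℂ) - (b ((n : ℤ) + 1)).map Complex.ofReal := by
      rw [Matrix.transpose_sub, Matrix.transpose_smul, Matrix.transpose_one,
        ← Matrix.transpose_map, hb_sym]
    have hut : (u (n + 2))ᵀ * (Ac a ((n : ℤ) + 1))ᵀ
        = (u (n+1))ᵀ * (z • (1 : Matrix (Fin m) (Fin m) ℂ) - (b ((n : ℤ) + 1)).map Complex.ofReal)
          - (u n)ᵀ * Ac a (n : ℤ) := by
      rw [← Matrix.transpose_mul, hu, Matrix.transpose_sub, Matrix.transpose_mul, hsym,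
        Matrix.transpose_mul, Matrix.transpose_transpose]
    show (u (n+1))ᵀ * (Ac a ((n+1 : ℕ) : ℤ) * v (n + 2)) -
      (u (n + 2))ᵀ * ((Ac a ((n+1 : ℕ) : ℤ))ᵀ * v (n+1)) = _
    rw [hcast, hv, ← mul_assoc (u (n+2))ᵀ, hut]
    simp only [Matrix.mul_sub, Matrix.sub_mul, mul_assoc]
    abel

end

section
variable {m : ℕ} (a b : ℤ → Matrix (Fin m) (Fin m) ℝ) (z : ℂ)

noncomputable def Jmat (a : ℤ → Matrix (Fin m) (Fin m) ℝ) :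
    Matrix (Fin m ⊕ Fin m) (Fin m ⊕ Fin m) ℂ :=
  Matrix.fromBlocks 0 (Ac a 0) (-(Ac a 0)ᵀ) 0

lemma symplectic (p : ℕ) (hp : 1 ≤ p) (ha_inv : ∀ n : ℤ, IsUnit (a n).det)
    (hb_sym : ∀ n : ℤ, (b n)ᵀ = b n) (ha_per : ∀ n : ℤ, a (n + p) = a n) :
    (monodromy a b p z)ᵀ * Jmat a * monodromy a b p z = Jmat a := by
  have hap : Ac a (p : ℤ) = Ac a 0 := by
    have := ha_per 0; rw [zero_add] at this; rw [Ac, this]; rfl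
  have W := fun y0 y1 w0 w1 => wronskian_const a b z ha_inv hb_sym y0 y1 w0 w1 p
  rw [hap] at W
  unfold monodromy Jmat
  rw [Matrix.fromBlocks_transpose, Matrix.fromBlocks_multiply, Matrix.fromBlocks_multiply]
  have h11 := W 1 0 1 0
  have h12 := W 1 0 0 1
  have h21 := W 0 1 1 0
  have h22 := W 0 1 0 1
  simp only [Matrix.transpose_one, Matrix.transpose_zero, Matrix.one_mul, Matrix.zero_mul,
    Matrix.mul_zero, sub_zero, zero_sub, Matrix.mul_one, ← mul_assoc] at h11 h12 h21 h22
  refine Matrix.fromBlocks_inj.mpr ⟨?_, ?_, ?_, ?_⟩ <;>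
    simp only [Matrix.mul_zero, Matrix.zero_mul, zero_add, add_zero, Matrix.mul_neg,
      Matrix.neg_mul, ← mul_assoc, neg_add_eq_sub]
  · exact h11
  · exact h12
  · exact h21
  · exact h22

end

section
variable {m : ℕ} (a b : ℤ → Matrix (Fin m) (Fin m) ℝ) (z : ℂ) (p : ℕ)

lemma Ac_unit (ha_inv : ∀ n : ℤ, IsUnit (a n).det) (n : ℤ) : IsUnit (Ac a n).det := by
  have h : Complex.ofRealHom (a n).det = (Ac a n).det := RingHom.map_det _ _
  rw [← h, isUnit_iff_ne_zero]
  have := isUnit_iff_ne_zero.mp (ha_inv n)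
  simpa using this

lemma Jmat_unit (ha_inv : ∀ n : ℤ, IsUnit (a n).det) : IsUnit (Jmat a).det := by
  have hA : IsUnit (Ac a 0).det := Ac_unit a ha_inv 0
  have hAT : IsUnit ((Ac a 0)ᵀ).det := by rwa [Matrix.det_transpose]
  have : Jmat a * Matrix.fromBlocks 0 (-((Ac a 0)ᵀ)⁻¹) ((Ac a 0)⁻¹) 0 = 1 := by
    unfold Jmat
    rw [Matrix.fromBlocks_multiply]
    rw [Matrix.mul_nonsing_inv _ hA]
    simp only [Matrix.mul_zero, Matrix.zero_mul, zero_add, add_zero, Matrix.neg_mul,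
      Matrix.mul_neg, neg_neg]
    rw [Matrix.mul_nonsing_inv _ hAT, neg_zero, ← Matrix.fromBlocks_one]
  have := congrArg Matrix.det this
  rw [Matrix.det_mul, Matrix.det_one] at this
  exact IsUnit.of_mul_eq_one _ this

lemma monodromy_det_unit (hp : 1 ≤ p) (ha_inv : ∀ n : ℤ, IsUnit (a n).det)
    (hb_sym : ∀ n : ℤ, (b n)ᵀ = b n) (ha_per : ∀ n : ℤ, a (n + p) = a n) :
    IsUnit (monodromy a b p z).det := by
  have hs := symplectic a b z p hp ha_inv hb_sym ha_per
  have := congrArg Matrix.det hs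
  rw [Matrix.det_mul, Matrix.det_mul, Matrix.det_transpose] at this
  have hJ := Jmat_unit a ha_inv
  rw [isUnit_iff_ne_zero]
  intro h
  rw [h] at this
  simp at this
  exact isUnit_iff_ne_zero.mp hJ this.symm

lemma DpolyTau_eval (τ : ℂ) :
    (DpolyTau a b p z).eval τ = (monodromy a b p z - τ • 1).det := by
  unfold DpolyTau
  rw [show eval τ _ = (Polynomial.evalRingHom τ) (((monodromy a b p z).map Polynomial.C -
      (Polynomial.X : Polynomial ℂ) • (1 : Matrix (Fin m ⊕ Fin m) (Fin m ⊕ Fin m) (Polynomial ℂ))).det) from rfl,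
    (Polynomial.evalRingHom τ).map_det]
  congr 1
  ext i j
  simp only [RingHom.mapMatrix_apply, Matrix.map_apply, Matrix.sub_apply, Matrix.smul_apply,
    Matrix.one_apply, smul_eq_mul]
  by_cases h : i = j <;> simp [h]

end

section
variable {m : ℕ} (a b : ℤ → Matrix (Fin m) (Fin m) ℝ) (z : ℂ) (p : ℕ)

lemma Dpoly_funceq (hp : 1 ≤ p) (ha_inv : ∀ n : ℤ, IsUnit (a n).det)
    (hb_sym : ∀ n : ℤ, (b n)ᵀ = b n) (ha_per : ∀ n : ℤ, a (n + p) = a n)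
    (τ : ℂ) (hτ : τ ≠ 0) :
    (DpolyTau a b p z).eval τ = Ring.inverse (monodromy a b p z).det *
      (τ ^ (Fintype.card (Fin m ⊕ Fin m)) * (DpolyTau a b p z).eval τ⁻¹) := by
  set M := monodromy a b p z with hM
  set J := Jmat a with hJ
  have hMd : IsUnit M.det := monodromy_det_unit a b z p hp ha_inv hb_sym ha_per
  have hJd : IsUnit J.det := Jmat_unit a ha_inv
  have hs : Mᵀ * J * M = J := symplectic a b z p hp ha_inv hb_sym ha_per
  have hJJ : J * J⁻¹ = 1 := Matrix.mul_nonsing_inv _ hJd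
  have h1 : Mᵀ * J = J * M⁻¹ := by
    have h : Mᵀ * J * M * M⁻¹ = J * M⁻¹ := by rw [hs]
    rwa [mul_assoc, Matrix.mul_nonsing_inv _ hMd, mul_one] at h
  have h2 : Mᵀ - τ • 1 = J * (M⁻¹ - τ • (1 : Matrix _ _ ℂ)) * J⁻¹ := by
    have : J * (M⁻¹ - τ • (1 : Matrix _ _ ℂ)) = (Mᵀ - τ • 1) * J := by
      rw [Matrix.mul_sub, ← h1, Matrix.mul_smul, mul_one, Matrix.sub_mul, Matrix.smul_mul, one_mul]
    rw [this, mul_assoc, hJJ, mul_one]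
  have h3 : (M - τ • 1).det = (M⁻¹ - τ • (1 : Matrix _ _ ℂ)).det := by
    have e1 : (M - τ • 1)ᵀ = Mᵀ - τ • 1 := by
      rw [Matrix.transpose_sub, Matrix.transpose_smul, Matrix.transpose_one]
    rw [← Matrix.det_transpose (M - τ • 1), e1, h2, Matrix.det_mul, Matrix.det_mul,
      mul_comm J.det, mul_assoc, ← Matrix.det_mul, hJJ, Matrix.det_one, mul_one]
  have h4 : M⁻¹ - τ • (1 : Matrix _ _ ℂ) = M⁻¹ * ((-τ) • (M - τ⁻¹ • 1)) := by
    rw [Matrix.mul_smul, Matrix.mul_sub, Matrix.nonsing_inv_mul _ hMd, Matrix.mul_smul, mul_one,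
      smul_sub, smul_smul, neg_mul, mul_inv_cancel₀ hτ]
    simp only [neg_smul, one_smul, sub_neg_eq_add, sub_eq_add_neg]
    abel
  have heven : Even (Fintype.card (Fin m ⊕ Fin m)) := by
    simp only [Fintype.card_sum, Fintype.card_fin]
    exact ⟨m, rfl⟩
  rw [DpolyTau_eval, DpolyTau_eval, h3, h4, Matrix.det_mul, Matrix.det_smul,
    heven.neg_pow, Matrix.det_nonsing_inv]

end

section
variable {m : ℕ} (a b : ℤ → Matrix (Fin m) (Fin m) ℝ) (z : ℂ) (p : ℕ)

lemma DpolyTau_eq_charpoly : DpolyTau a b p z = (monodromy a b p z).charpoly := by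
  unfold DpolyTau Matrix.charpoly
  have h1 : (monodromy a b p z).map Polynomial.C -
      (Polynomial.X : Polynomial ℂ) • (1 : Matrix (Fin m ⊕ Fin m) (Fin m ⊕ Fin m) (Polynomial ℂ))
      = -(Matrix.charmatrix (monodromy a b p z)) := by
    unfold Matrix.charmatrix
    rw [neg_sub]
    congr 1
    ext i j
    simp [Matrix.smul_apply, Matrix.one_apply, Matrix.scalar_apply, Matrix.diagonal_apply,
      mul_ite, mul_one, mul_zero]
  rw [h1, Matrix.det_neg]
  have heven : Even (Fintype.card (Fin m ⊕ Fin m)) := by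
    simp only [Fintype.card_sum, Fintype.card_fin]; exact ⟨m, rfl⟩
  rw [heven.neg_one_pow, one_mul]

lemma DpolyTau_monic : (DpolyTau a b p z).Monic := by
  rw [DpolyTau_eq_charpoly]; exact Matrix.charpoly_monic _

lemma DpolyTau_natDegree : (DpolyTau a b p z).natDegree = Fintype.card (Fin m ⊕ Fin m) := by
  rw [DpolyTau_eq_charpoly]; exact Matrix.charpoly_natDegree_eq_dim _

end

section
variable {m : ℕ} (a b : ℤ → Matrix (Fin m) (Fin m) ℝ) (z : ℂ) (p : ℕ)

lemma Dpoly_roots_inv (hp : 1 ≤ p) (ha_inv : ∀ n : ℤ, IsUnit (a n).det)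
    (hb_sym : ∀ n : ℤ, (b n)ᵀ = b n) (ha_per : ∀ n : ℤ, a (n + p) = a n) :
    (DpolyTau a b p z).roots = (DpolyTau a b p z).roots.map (·⁻¹) := by
  set P := DpolyTau a b p z with hP
  set M := monodromy a b p z with hM
  have hMd : IsUnit M.det := monodromy_det_unit a b z p hp ha_inv hb_sym ha_per
  have hmonic : P.Monic := DpolyTau_monic a b z p
  have hPne : P ≠ 0 := hmonic.ne_zero
  have hsplit : P.Splits := Polynomial.splits_iff_card_roots.mpr IsAlgClosed.card_roots_eq_natDegree
  have hcard : P.roots.card = P.natDegree := (Polynomial.splits_iff_card_roots).mp hsplit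
  have hprod : (P.roots.map fun r => X - C r).prod = P := by
    have h := Polynomial.C_leadingCoeff_mul_prod_multiset_X_sub_C (p := P) hcard
    rwa [hmonic.leadingCoeff, Polynomial.C_1, one_mul] at h
  -- 0 is not a root
  have heval0 : P.eval 0 = M.det := by
    rw [hP, DpolyTau_eval]; norm_num; rfl
  have hzero : ∀ r ∈ P.roots, r ≠ 0 := by
    intro r hr h0
    have := Polynomial.isRoot_of_mem_roots hr
    rw [h0, Polynomial.IsRoot, heval0] at this
    exact isUnit_iff_ne_zero.mp hMd this
  set n := Fintype.card (Fin m ⊕ Fin m) with hn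
  set c := Ring.inverse M.det with hc
  have hcne : c ≠ 0 := by
    rw [hc, Ring.inverse_eq_inv']
    exact inv_ne_zero (isUnit_iff_ne_zero.mp hMd)
  set S := P.roots.map (·⁻¹) with hS
  set P' := (S.map fun r => X - C r).prod with hP'
  have hP'monic : P'.Monic :=
    Polynomial.monic_multiset_prod_of_monic _ _ fun r _ => Polynomial.monic_X_sub_C r
  set k : ℂ := (P.roots.map fun r => -r⁻¹).prod * c⁻¹ with hk
  have key : ∀ τ : ℂ, τ ≠ 0 → P'.eval τ = (Polynomial.C k * P).eval τ := by
    intro τ hτ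
    have hfun := Dpoly_funceq a b z p hp ha_inv hb_sym ha_per τ hτ
    have hτn : τ ^ n * P.eval τ⁻¹ = c⁻¹ * P.eval τ := by
      have hcc : Ring.inverse (monodromy a b p z).det = c := rfl
      have hPP : DpolyTau a b p z = P := rfl
      have hnn : Fintype.card (Fin m ⊕ Fin m) = n := rfl
      rw [hcc, hPP, hnn] at hfun
      rw [hfun, ← mul_assoc, inv_mul_cancel₀ hcne, one_mul]
    have e1 : P'.eval τ = (P.roots.map fun r => τ - r⁻¹).prod := by
      rw [hP', Polynomial.eval_multiset_prod, Multiset.map_map, hS, Multiset.map_map]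
      congr 1
      apply Multiset.map_congr rfl
      intro r _
      simp
    have e2 : (P.roots.map fun r => τ - r⁻¹).prod
        = (P.roots.map fun r => (-r⁻¹ * τ) * (τ⁻¹ - r)).prod := by
      apply congrArg
      apply Multiset.map_congr rfl
      intro r hr
      have hr0 := hzero r hr
      field_simp
      ring
    have e3 : (P.roots.map fun r => (-r⁻¹ * τ) * (τ⁻¹ - r)).prod
        = ((P.roots.map fun r => -r⁻¹).prod * τ ^ n) * P.eval τ⁻¹ := by
      rw [Multiset.prod_map_mul, Multiset.prod_map_mul]
      congr 1
      · congr 1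
        rw [Multiset.map_const', Multiset.prod_replicate, hcard,
          DpolyTau_natDegree a b z p, ← hn]
      · conv_rhs => rw [← hprod]
        rw [Polynomial.eval_multiset_prod, Multiset.map_map]
        congr 1
        apply Multiset.map_congr rfl
        intro r _
        simp
    rw [e1, e2, e3, mul_assoc, hτn, Polynomial.eval_mul, Polynomial.eval_C, hk]
    ring
  have hinf : P' = Polynomial.C k * P := by
    apply Polynomial.eq_of_infinite_eval_eq
    apply Set.Infinite.mono (s := {(0 : ℂ)}ᶜ)
    · intro τ hτ
      exact key τ hτ
    · exact Set.Finite.infinite_compl (Set.finite_singleton 0)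
  have hk1 : k = 1 := by
    have := congrArg Polynomial.leadingCoeff hinf
    rwa [hP'monic.leadingCoeff, Polynomial.leadingCoeff_mul, Polynomial.leadingCoeff_C,
      hmonic.leadingCoeff, mul_one, eq_comm] at this
  rw [hk1, Polynomial.C_1, one_mul] at hinf
  have hroots : P'.roots = S := Polynomial.roots_multiset_prod_X_sub_C S
  have h2 : P.roots = P'.roots := by rw [hinf]
  rw [h2, hroots]

end

section
variable {m : ℕ} (a b : ℤ → Matrix (Fin m) (Fin m) ℝ) (z : ℂ) (p : ℕ)

lemma real_map_fixed (A : Matrix (Fin m) (Fin m) ℝ) :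
    (A.map Complex.ofReal).map (starRingEnd ℂ) = A.map Complex.ofReal := by
  ext i j
  simp [Matrix.map_apply, Complex.conj_ofReal]

lemma smul_one_fixed (hz : (starRingEnd ℂ) z = z) :
    (z • (1 : Matrix (Fin m) (Fin m) ℂ)).map (starRingEnd ℂ) = z • 1 := by
  ext i j
  by_cases h : i = j <;>
    simp [Matrix.map_apply, Matrix.smul_apply, Matrix.one_apply, h, hz]

lemma matSol_real (hz : (starRingEnd ℂ) z = z) (y0 y1 : Matrix (Fin m) (Fin m) ℂ)
    (h0 : y0.map (starRingEnd ℂ) = y0) (h1 : y1.map (starRingEnd ℂ) = y1) :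
    ∀ n, (matSol a b z y0 y1 n).map (starRingEnd ℂ) = matSol a b z y0 y1 n := by
  suffices h : ∀ n, (matSol a b z y0 y1 n).map (starRingEnd ℂ) = matSol a b z y0 y1 n ∧
      (matSol a b z y0 y1 (n + 1)).map (starRingEnd ℂ) = matSol a b z y0 y1 (n + 1) from
    fun n => (h n).1
  intro n
  induction n with
  | zero => exact ⟨h0, h1⟩
  | succ n ih =>
    refine ⟨ih.2, ?_⟩
    have hdef : matSol a b z y0 y1 (n + 2) =
        (((a ((n : ℤ) + 1))⁻¹).map Complex.ofReal) *
          ((z • (1 : Matrix (Fin m) (Fin m) ℂ) - (b ((n : ℤ) + 1)).map Complex.ofReal) *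
              matSol a b z y0 y1 (n + 1) -
            ((a (n : ℤ)).map Complex.ofReal)ᵀ * matSol a b z y0 y1 n) := rfl
    have hsub : ∀ (X Y : Matrix (Fin m) (Fin m) ℂ),
        (X - Y).map (starRingEnd ℂ) = X.map (starRingEnd ℂ) - Y.map (starRingEnd ℂ) :=
      fun X Y => Matrix.map_sub _ (fun x y => map_sub (starRingEnd ℂ) x y) X Y
    rw [hdef, Matrix.map_mul, hsub, Matrix.map_mul, Matrix.map_mul, hsub,
      smul_one_fixed z hz, real_map_fixed, real_map_fixed, ih.1, ih.2,
      ← Matrix.transpose_map, real_map_fixed]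

lemma monodromy_real (hz : (starRingEnd ℂ) z = z) :
    (monodromy a b p z).map (starRingEnd ℂ) = monodromy a b p z := by
  unfold monodromy
  rw [Matrix.fromBlocks_map]
  have hone : (1 : Matrix (Fin m) (Fin m) ℂ).map (starRingEnd ℂ) = 1 :=
    Matrix.map_one _ (map_zero _) (map_one _)
  have hzero : (0 : Matrix (Fin m) (Fin m) ℂ).map (starRingEnd ℂ) = 0 :=
    Matrix.map_zero _ (map_zero _)
  rw [matSol_real a b z hz 1 0 hone hzero, matSol_real a b z hz 0 1 hzero hone,
    matSol_real a b z hz 1 0 hone hzero, matSol_real a b z hz 0 1 hzero hone]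

lemma Dpoly_real (hz : (starRingEnd ℂ) z = z) :
    (DpolyTau a b p z).map (starRingEnd ℂ) = DpolyTau a b p z := by
  unfold DpolyTau
  rw [show ((((monodromy a b p z).map Polynomial.C -
      (Polynomial.X : Polynomial ℂ) • 1).det).map (starRingEnd ℂ)) =
    (Polynomial.mapRingHom (starRingEnd ℂ)) (((monodromy a b p z).map Polynomial.C -
      (Polynomial.X : Polynomial ℂ) • 1).det) from rfl, RingHom.map_det]
  congr 1
  ext i j
  have hentry : (starRingEnd ℂ) (monodromy a b p z i j) = monodromy a b p z i j := by
    have h := monodromy_real a b z p hz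
    exact congrFun (congrFun h i) j
  simp only [RingHom.mapMatrix_apply, Matrix.map_apply, Matrix.sub_apply, Matrix.smul_apply,
    Matrix.one_apply, smul_eq_mul, Polynomial.coe_mapRingHom, Polynomial.map_sub,
    Polynomial.map_C, hentry]
  by_cases h : i = j <;> simp [h]

end

/-- The multiplicity of `τ₀ ≠ 0` as a root of `τ ↦ D(z,τ)` equals that of `τ₀⁻¹`;
and if `z` is real, the multiplicity of the conjugate of `τ₀` equals that of `τ₀`. -/

theorem multiplier_multiplicities (m p : ℕ) (hm : 1 ≤ m) (hp : 1 ≤ p)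
    (a b : ℤ → Matrix (Fin m) (Fin m) ℝ)
    (ha_per : ∀ n : ℤ, a (n + p) = a n) (hb_per : ∀ n : ℤ, b (n + p) = b n)
    (hb_sym : ∀ n : ℤ, (b n)ᵀ = b n) (ha_inv : ∀ n : ℤ, IsUnit (a n).det)
    (z : ℂ) (τ₀ : ℂ) (hτ₀ : τ₀ ≠ 0) :
    (DpolyTau a b p z).rootMultiplicity τ₀ = (DpolyTau a b p z).rootMultiplicity τ₀⁻¹ ∧
    (z.im = 0 →
      (DpolyTau a b p z).rootMultiplicity ((starRingEnd ℂ) τ₀) =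
        (DpolyTau a b p z).rootMultiplicity τ₀) := by
  classical
  set P := DpolyTau a b p z with hPdef
  constructor
  · have h := Dpoly_roots_inv a b z p hp ha_inv hb_sym ha_per
    rw [← Polynomial.count_roots, ← Polynomial.count_roots]
    conv_lhs => rw [h]
    have := Multiset.count_map_eq_count' (fun x : ℂ => x⁻¹) P.roots inv_injective τ₀⁻¹
    rw [inv_inv] at this
    exact this
  · intro hzim
    have hz : (starRingEnd ℂ) z = z := Complex.conj_eq_iff_im.mpr hzim
    have hreal := Dpoly_real a b z p hz
    have hsplit : P.Splits := Polynomial.splits_iff_card_roots.mpr IsAlgClosed.card_roots_eq_natDegree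
    have hmap : (P.map (starRingEnd ℂ)).roots = P.roots.map (starRingEnd ℂ) :=
      hsplit.roots_map_of_injective (starRingEnd ℂ).injective
    rw [hreal] at hmap
    rw [← Polynomial.count_roots, ← Polynomial.count_roots]
    conv_lhs => rw [hmap]
    exact Multiset.count_map_eq_count' _ P.roots (starRingEnd ℂ).injective τ₀
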